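/- Let H be a compact quantum group with normal integral φ and inner product ⟨x,y⟩ = φ(S(y∘)x). For any linear functional τ on H, the adjoint of the convolution operator id ⋆ τ is id ⋆ (conj(τ) ∘ ∘), and the adjoint of τ ⋆ id is (conj(τ) ∘ S² ∘ ∘) ⋆ id. -/

import Mathlib

open TensorProduct Coalgebra HopfAlgebra

variable {H : Type*} [Ring H] [HopfAlgebra ℂ H]

/-- `φ` is a right integral: `Σ φ(x₁) x₂ = φ(x) 1`. -/
def IsRightIntegral (φ : H →ₗ[ℂ] ℂ) : Prop :=
  ∀ x : H,
    TensorProduct.lid ℂ H ((LinearMap.rTensor H φ) (Coalgebra.comul (R := ℂ) x)) = φ x • 1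

/-- `φ` is a left integral: `Σ x₁ φ(x₂) = φ(x) 1`. -/
def IsLeftIntegral (φ : H →ₗ[ℂ] ℂ) : Prop :=
  ∀ x : H,
    TensorProduct.rid ℂ H ((LinearMap.lTensor H φ) (Coalgebra.comul (R := ℂ) x)) = φ x • 1

/-- The sesquilinear form `⟨x, y⟩ = φ(S(y∘) x)` attached to the integral `φ`. -/
noncomputable def intInner (circ : H → H) (φ : H →ₗ[ℂ] ℂ) (x y : H) : ℂ :=
  φ (antipode (R := ℂ) (circ y) * x)



noncomputable section CQGAux

open TensorProduct Coalgebra HopfAlgebra LinearMap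

namespace CQGAux

variable {H : Type*} [Ring H] [HopfAlgebra ℂ H]

/-- The map `a ↦ Σ S(a₂) ⊗ S(a₁)`. -/
noncomputable def gmapAux : H →ₗ[ℂ] H ⊗[ℂ] H :=
  (TensorProduct.map (antipode (R := ℂ)) (antipode (R := ℂ))) ∘ₗ
    (TensorProduct.comm ℂ H H).toLinearMap ∘ₗ Coalgebra.comul

lemma gmapAux_repr {ι : Type*} {w : H} (r : Repr ℂ w ι) :
    gmapAux (H := H) w = ∑ k ∈ r.index,
      antipode (R := ℂ) (r.right k) ⊗ₜ[ℂ] antipode (R := ℂ) (r.left k) := by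
  simp [gmapAux, ← r.eq, map_sum]

lemma sum_counit_smul_right {ι : Type*} {a : H} (r : Repr ℂ a ι) :
    ∑ i ∈ r.index, counit (R := ℂ) (r.left i) • r.right i = a := by
  have h := congrArg (TensorProduct.lid ℂ H) (sum_counit_tmul_eq r)
  simp only [map_sum, TensorProduct.lid_tmul, one_smul] at h
  exact h

lemma sum_smul_counit_left {ι : Type*} {a : H} (r : Repr ℂ a ι) :
    ∑ i ∈ r.index, counit (R := ℂ) (r.right i) • r.left i = a := by
  have h := congrArg (TensorProduct.rid ℂ H) (sum_tmul_counit_eq r)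
  simp only [map_sum, TensorProduct.rid_tmul, one_smul] at h
  exact h

lemma convA {ι : Type*} {c : H} (r : Repr ℂ c ι) :
    ∑ i ∈ r.index, Coalgebra.comul (R := ℂ) (antipode (R := ℂ) (r.left i)) *
        Coalgebra.comul (R := ℂ) (r.right i)
      = counit (R := ℂ) c • (1 : H ⊗[ℂ] H) := by
  have : ∀ i ∈ r.index,
      Coalgebra.comul (R := ℂ) (antipode (R := ℂ) (r.left i)) * Coalgebra.comul (R := ℂ) (r.right i)
        = Coalgebra.comul (R := ℂ) (antipode (R := ℂ) (r.left i) * r.right i) := by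
    intro i _; rw [Bialgebra.comul_mul]
  rw [Finset.sum_congr rfl this, ← map_sum, sum_antipode_mul_eq_smul, map_smul,
    Bialgebra.comul_one]

lemma convB {ι : Type*} {c : H} (r : Repr ℂ c ι) :
    ∑ i ∈ r.index, Coalgebra.comul (R := ℂ) (r.left i) * gmapAux (r.right i)
      = counit (R := ℂ) c • (1 : H ⊗[ℂ] H) := by
  classical
  set S : H →ₗ[ℂ] H := antipode (R := ℂ) with hS
  let rl : (i : r.ι) → Repr ℂ (r.left i) (H × H) := fun i => ℛ ℂ _
  let rm : (i : r.ι) → Repr ℂ (r.right i) (H × H) := fun i => ℛ ℂ _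
  let rm2 : (i : r.ι) → (k : (rm i).ι) → Repr ℂ ((rm i).left k) (H × H) := fun i k => ℛ ℂ _
  let rw' : (i : r.ι) → (k : (rm i).ι) → Repr ℂ ((rm i).right k) (H × H) := fun i k => ℛ ℂ _
  let F : H ⊗[ℂ] (H ⊗[ℂ] (H ⊗[ℂ] H)) →ₗ[ℂ] H ⊗[ℂ] H :=
    (LinearMap.mul' ℂ (H ⊗[ℂ] H)) ∘ₗ
      ((TensorProduct.assoc ℂ H H (H ⊗[ℂ] H)).symm).toLinearMap ∘ₗ
      lTensor H (lTensor H ((TensorProduct.map S S) ∘ₗ (TensorProduct.comm ℂ H H).toLinearMap))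
  have hF : ∀ p q m w : H, F (p ⊗ₜ (q ⊗ₜ (m ⊗ₜ w))) = (p * S w) ⊗ₜ[ℂ] (q * S m) := by
    intro p q m w
    simp [F, Algebra.TensorProduct.tmul_mul_tmul]
  -- coassociativity, twice
  have h1 := sum_tmul_tmul_eq r rl rm
  have h2 := congrArg (lTensor H (lTensor H (Coalgebra.comul (R := ℂ)))) h1
  simp only [map_sum, lTensor_tmul] at h2
  -- expand comul (r.right i) on the left of h2
  have h2l : ∑ i ∈ r.index, ∑ j ∈ (rl i).index,
      (rl i).left j ⊗ₜ[ℂ] ((rl i).right j ⊗ₜ[ℂ] Coalgebra.comul (R := ℂ) (r.right i))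
      = ∑ i ∈ r.index, ∑ j ∈ (rl i).index, ∑ k ∈ (rm i).index,
      (rl i).left j ⊗ₜ[ℂ] ((rl i).right j ⊗ₜ[ℂ] ((rm i).left k ⊗ₜ[ℂ] (rm i).right k)) := by
    refine Finset.sum_congr rfl fun i _ => Finset.sum_congr rfl fun j _ => ?_
    rw [← (rm i).eq, tmul_sum, tmul_sum]
  -- expand comul ((rm i).right k) on the right of h2 and re-associate via coassoc
  have h2r : ∑ i ∈ r.index, ∑ k ∈ (rm i).index,
      r.left i ⊗ₜ[ℂ] ((rm i).left k ⊗ₜ[ℂ] Coalgebra.comul (R := ℂ) ((rm i).right k))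
      = ∑ i ∈ r.index, ∑ k ∈ (rm i).index, ∑ l ∈ (rm2 i k).index,
      r.left i ⊗ₜ[ℂ] ((rm2 i k).left l ⊗ₜ[ℂ] ((rm2 i k).right l ⊗ₜ[ℂ] (rm i).right k)) := by
    refine Finset.sum_congr rfl fun i _ => ?_
    have hco := sum_tmul_tmul_eq (rm i) (rm2 i) (rw' i)
    calc ∑ k ∈ (rm i).index,
          r.left i ⊗ₜ[ℂ] ((rm i).left k ⊗ₜ[ℂ] Coalgebra.comul (R := ℂ) ((rm i).right k))
        = r.left i ⊗ₜ[ℂ] (∑ k ∈ (rm i).index, ∑ l ∈ (rw' i k).index,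
            (rm i).left k ⊗ₜ[ℂ] ((rw' i k).left l ⊗ₜ[ℂ] (rw' i k).right l)) := by
          rw [tmul_sum]
          refine Finset.sum_congr rfl fun k _ => ?_
          rw [← (rw' i k).eq, tmul_sum, tmul_sum]
      _ = r.left i ⊗ₜ[ℂ] (∑ k ∈ (rm i).index, ∑ l ∈ (rm2 i k).index,
            (rm2 i k).left l ⊗ₜ[ℂ] ((rm2 i k).right l ⊗ₜ[ℂ] (rm i).right k)) := by rw [hco]
      _ = _ := by rw [tmul_sum]; exact Finset.sum_congr rfl fun k _ => by rw [tmul_sum]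
  rw [h2l, h2r] at h2
  -- apply F to both sides
  have h3 := congrArg F h2
  simp only [map_sum, hF] at h3
  -- h3's LHS is the goal's LHS
  have hgl : ∑ i ∈ r.index, Coalgebra.comul (R := ℂ) (r.left i) * gmapAux (r.right i)
      = ∑ i ∈ r.index, ∑ j ∈ (rl i).index, ∑ k ∈ (rm i).index,
        ((rl i).left j * S ((rm i).right k)) ⊗ₜ[ℂ] ((rl i).right j * S ((rm i).left k)) := by
    refine Finset.sum_congr rfl fun i _ => ?_
    rw [← (rl i).eq, gmapAux_repr (rm i), Finset.sum_mul_sum]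
    simp only [Algebra.TensorProduct.tmul_mul_tmul, hS]
  rw [hgl, h3]
  -- now collapse the right-hand side
  have hcol : ∀ i ∈ r.index, ∑ k ∈ (rm i).index, ∑ l ∈ (rm2 i k).index,
      (r.left i * S ((rm i).right k)) ⊗ₜ[ℂ] ((rm2 i k).left l * S ((rm2 i k).right l))
      = (r.left i * S (r.right i)) ⊗ₜ[ℂ] 1 := by
    intro i _
    have hin : ∀ k ∈ (rm i).index, ∑ l ∈ (rm2 i k).index,
        (r.left i * S ((rm i).right k)) ⊗ₜ[ℂ] ((rm2 i k).left l * S ((rm2 i k).right l))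
        = counit (R := ℂ) ((rm i).left k) • ((r.left i * S ((rm i).right k)) ⊗ₜ[ℂ] 1) := by
      intro k _
      rw [← tmul_sum, hS, sum_mul_antipode_eq_smul (rm2 i k), tmul_smul]
    rw [Finset.sum_congr rfl hin]
    have hc2 : ∑ k ∈ (rm i).index, counit (R := ℂ) ((rm i).left k) •
        ((r.left i * S ((rm i).right k)) ⊗ₜ[ℂ] (1 : H))
        = (r.left i * S (∑ k ∈ (rm i).index, counit (R := ℂ) ((rm i).left k) • (rm i).right k))
            ⊗ₜ[ℂ] 1 := by
      simp only [map_sum, map_smul, Finset.mul_sum, mul_smul_comm, sum_tmul, smul_tmul']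
    rw [hc2, sum_counit_smul_right (rm i)]
  rw [Finset.sum_congr rfl hcol, ← sum_tmul, hS, sum_mul_antipode_eq_smul r,
    Algebra.TensorProduct.one_def, smul_tmul']

lemma comul_antipode' (a : H) :
    Coalgebra.comul (R := ℂ) (antipode (R := ℂ) a) = gmapAux a := by
  classical
  set r := ℛ ℂ a with hrdef
  let rl : (i : r.ι) → Repr ℂ (r.left i) (H × H) := fun i => ℛ ℂ _
  let rm : (i : r.ι) → Repr ℂ (r.right i) (H × H) := fun i => ℛ ℂ _
  let fm : H →ₗ[ℂ] H ⊗[ℂ] H := Coalgebra.comul ∘ₗ antipode (R := ℂ)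
  let Φ : H ⊗[ℂ] (H ⊗[ℂ] H) →ₗ[ℂ] H ⊗[ℂ] H :=
    (LinearMap.mul' ℂ (H ⊗[ℂ] H)) ∘ₗ
      TensorProduct.map fm ((LinearMap.mul' ℂ (H ⊗[ℂ] H)) ∘ₗ
        TensorProduct.map (Coalgebra.comul) gmapAux)
  have hΦ : ∀ x y z : H, Φ (x ⊗ₜ (y ⊗ₜ z)) =
      fm x * (Coalgebra.comul (R := ℂ) y * gmapAux z) := by
    intro x y z; simp [Φ]
  have h1 := sum_tmul_tmul_eq r rl rm
  have h2 := congrArg Φ h1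
  simp only [map_sum, hΦ] at h2
  have hL : ∑ i ∈ r.index, ∑ j ∈ (rl i).index,
      fm ((rl i).left j) * (Coalgebra.comul (R := ℂ) ((rl i).right j) * gmapAux (r.right i))
      = gmapAux a := by
    have step : ∀ i ∈ r.index, ∑ j ∈ (rl i).index,
        fm ((rl i).left j) * (Coalgebra.comul (R := ℂ) ((rl i).right j) * gmapAux (r.right i))
        = counit (R := ℂ) (r.left i) • gmapAux (r.right i) := by
      intro i _
      have hass : ∀ j ∈ (rl i).index,
          fm ((rl i).left j) * (Coalgebra.comul (R := ℂ) ((rl i).right j) * gmapAux (r.right i))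
          = (Coalgebra.comul (R := ℂ) (antipode (R := ℂ) ((rl i).left j)) *
              Coalgebra.comul (R := ℂ) ((rl i).right j)) * gmapAux (r.right i) := by
        intro j _; rw [mul_assoc]; rfl
      rw [Finset.sum_congr rfl hass, ← Finset.sum_mul, convA (rl i), smul_mul_assoc, one_mul]
    rw [Finset.sum_congr rfl step]
    simp only [← map_smul, ← map_sum]
    rw [sum_counit_smul_right r]
  have hR : ∑ i ∈ r.index, ∑ k ∈ (rm i).index,
      fm (r.left i) * (Coalgebra.comul (R := ℂ) ((rm i).left k) * gmapAux ((rm i).right k))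
      = fm a := by
    have step : ∀ i ∈ r.index, ∑ k ∈ (rm i).index,
        fm (r.left i) * (Coalgebra.comul (R := ℂ) ((rm i).left k) * gmapAux ((rm i).right k))
        = counit (R := ℂ) (r.right i) • fm (r.left i) := by
      intro i _
      rw [← Finset.mul_sum, convB (rm i), mul_smul_comm, mul_one]
    rw [Finset.sum_congr rfl step]
    simp only [← map_smul, ← map_sum]
    rw [sum_smul_counit_left r]
  rw [hL, hR] at h2
  exact h2.symm

lemma comul_antipode_repr {ι : Type*} {w : H} (r : Repr ℂ w ι) :
    Coalgebra.comul (R := ℂ) (antipode (R := ℂ) w) =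
      ∑ k ∈ r.index, antipode (R := ℂ) (r.right k) ⊗ₜ[ℂ] antipode (R := ℂ) (r.left k) := by
  rw [comul_antipode', gmapAux_repr r]

lemma counit_antipode' (a : H) :
    counit (R := ℂ) (antipode (R := ℂ) a) = counit (R := ℂ) a := by
  classical
  set r := ℛ ℂ a with hrdef
  have h := congrArg (counit (R := ℂ)) (sum_antipode_mul_eq_smul r)
  simp only [map_sum, map_smul, Bialgebra.counit_mul, Bialgebra.counit_one,
    smul_eq_mul, mul_one] at h
  have h2 := congrArg (fun z => counit (R := ℂ) (antipode (R := ℂ) z)) (sum_smul_counit_left r)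
  simp only [map_sum, map_smul, smul_eq_mul] at h2
  rw [← h2, ← h]
  exact Finset.sum_congr rfl fun i _ => mul_comm _ _

end CQGAux

namespace CQGAux

variable {H : Type*} [Ring H] [HopfAlgebra ℂ H]

lemma star_r {φ : H →ₗ[ℂ] ℂ} (hr : IsRightIntegral φ) {ι κ : Type*} (w x : H)
    (rw' : Repr ℂ w ι) (rx : Repr ℂ x κ) :
    ∑ k ∈ rw'.index, ∑ i ∈ rx.index,
      φ (antipode (R := ℂ) (rw'.right k) * rx.left i) •
        (antipode (R := ℂ) (rw'.left k) * rx.right i)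
      = φ (antipode (R := ℂ) w * x) • 1 := by
  have hexp : Coalgebra.comul (R := ℂ) (antipode (R := ℂ) w * x)
      = ∑ k ∈ rw'.index, ∑ i ∈ rx.index,
        (antipode (R := ℂ) (rw'.right k) * rx.left i) ⊗ₜ[ℂ]
          (antipode (R := ℂ) (rw'.left k) * rx.right i) := by
    rw [Bialgebra.comul_mul, comul_antipode_repr rw', ← rx.eq, Finset.sum_mul_sum]
    exact Finset.sum_congr rfl fun k _ => Finset.sum_congr rfl fun i _ => by
      rw [Algebra.TensorProduct.tmul_mul_tmul]
  have h := hr (antipode (R := ℂ) w * x)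
  rw [hexp] at h
  simp only [map_sum, LinearMap.rTensor_tmul, TensorProduct.lid_tmul] at h
  exact h

lemma star_l {φ : H →ₗ[ℂ] ℂ} (hl : IsLeftIntegral φ) {ι κ : Type*} (w x : H)
    (rw' : Repr ℂ w ι) (rx : Repr ℂ x κ) :
    ∑ k ∈ rw'.index, ∑ i ∈ rx.index,
      φ (antipode (R := ℂ) (rw'.left k) * rx.right i) •
        (antipode (R := ℂ) (rw'.right k) * rx.left i)
      = φ (antipode (R := ℂ) w * x) • 1 := by
  have hexp : Coalgebra.comul (R := ℂ) (antipode (R := ℂ) w * x)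
      = ∑ k ∈ rw'.index, ∑ i ∈ rx.index,
        (antipode (R := ℂ) (rw'.right k) * rx.left i) ⊗ₜ[ℂ]
          (antipode (R := ℂ) (rw'.left k) * rx.right i) := by
    rw [Bialgebra.comul_mul, comul_antipode_repr rw', ← rx.eq, Finset.sum_mul_sum]
    exact Finset.sum_congr rfl fun k _ => Finset.sum_congr rfl fun i _ => by
      rw [Algebra.TensorProduct.tmul_mul_tmul]
  have h := hl (antipode (R := ℂ) w * x)
  rw [hexp] at h
  simp only [map_sum, LinearMap.lTensor_tmul, TensorProduct.rid_tmul] at h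
  exact h

lemma key1 {φ : H →ₗ[ℂ] ℂ} (hr : IsRightIntegral φ) {ι κ : Type*} (a x : H)
    (ra : Repr ℂ a ι) (rx : Repr ℂ x κ) :
    ∑ i ∈ rx.index, φ (antipode (R := ℂ) a * rx.left i) • rx.right i
      = ∑ j ∈ ra.index, φ (antipode (R := ℂ) (ra.right j) * x) • ra.left j := by
  classical
  let ru : (j : ra.ι) → Repr ℂ (ra.left j) (H × H) := fun j => ℛ ℂ _
  let rv : (j : ra.ι) → Repr ℂ (ra.right j) (H × H) := fun j => ℛ ℂ _
  let L : H →ₗ[ℂ] H :=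
    ∑ i ∈ rx.index, ((φ ∘ₗ LinearMap.mulRight ℂ (rx.left i)) ∘ₗ
      antipode (R := ℂ)).smulRight (rx.right i)
  have hL : ∀ s : H, L s = ∑ i ∈ rx.index, φ (antipode (R := ℂ) s * rx.left i) • rx.right i := by
    intro s; simp [L, LinearMap.sum_apply]
  let Ψ : H ⊗[ℂ] (H ⊗[ℂ] H) →ₗ[ℂ] H :=
    (LinearMap.mul' ℂ H) ∘ₗ LinearMap.lTensor H ((LinearMap.mul' ℂ H) ∘ₗ
      TensorProduct.map (antipode (R := ℂ)) L)
  have hΨ : ∀ p q s : H, Ψ (p ⊗ₜ (q ⊗ₜ s)) = p * (antipode (R := ℂ) q * L s) := by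
    intro p q s; simp [Ψ]
  have h1 := sum_tmul_tmul_eq ra ru rv
  have h2 := congrArg Ψ h1
  simp only [map_sum, hΨ] at h2
  have hLa : ∑ j ∈ ra.index, ∑ k ∈ (ru j).index,
      (ru j).left k * (antipode (R := ℂ) ((ru j).right k) * L (ra.right j)) = L a := by
    have step : ∀ j ∈ ra.index, ∑ k ∈ (ru j).index,
        (ru j).left k * (antipode (R := ℂ) ((ru j).right k) * L (ra.right j))
        = counit (R := ℂ) (ra.left j) • L (ra.right j) := by
      intro j _
      have hass : ∀ k ∈ (ru j).index,
          (ru j).left k * (antipode (R := ℂ) ((ru j).right k) * L (ra.right j))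
          = ((ru j).left k * antipode (R := ℂ) ((ru j).right k)) * L (ra.right j) := by
        intro k _; rw [mul_assoc]
      rw [Finset.sum_congr rfl hass, ← Finset.sum_mul, sum_mul_antipode_eq_smul (ru j),
        smul_mul_assoc, one_mul]
    rw [Finset.sum_congr rfl step]
    simp only [← map_smul, ← map_sum]
    rw [sum_counit_smul_right ra]
  rw [hLa] at h2
  have hRb : ∑ j ∈ ra.index, ∑ k ∈ (rv j).index,
      ra.left j * (antipode (R := ℂ) ((rv j).left k) * L ((rv j).right k))
      = ∑ j ∈ ra.index, φ (antipode (R := ℂ) (ra.right j) * x) • ra.left j := by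
    refine Finset.sum_congr rfl fun j _ => ?_
    have expand : ∀ k ∈ (rv j).index,
        ra.left j * (antipode (R := ℂ) ((rv j).left k) * L ((rv j).right k))
        = ∑ i ∈ rx.index, φ (antipode (R := ℂ) ((rv j).right k) * rx.left i) •
            (ra.left j * (antipode (R := ℂ) ((rv j).left k) * rx.right i)) := by
      intro k _
      rw [hL]
      simp [Finset.mul_sum, mul_smul_comm]
    rw [Finset.sum_congr rfl expand]
    have h5 := congrArg (fun z => ra.left j * z) (star_r hr (ra.right j) x (rv j) rx)
    simp only [Finset.mul_sum, mul_smul_comm, mul_one] at h5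
    exact h5
  rw [hRb] at h2
  rw [← h2, hL a]

lemma key2 {φ : H →ₗ[ℂ] ℂ} (hl : IsLeftIntegral φ) {ι κ : Type*} (a x : H)
    (ra : Repr ℂ a ι) (rx : Repr ℂ x κ) :
    ∑ i ∈ rx.index, φ (antipode (R := ℂ) a * rx.right i) • rx.left i
      = ∑ j ∈ ra.index, φ (antipode (R := ℂ) (ra.left j) * x) •
          antipode (R := ℂ) (antipode (R := ℂ) (ra.right j)) := by
  classical
  let ru : (j : ra.ι) → Repr ℂ (ra.left j) (H × H) := fun j => ℛ ℂ _
  let rv : (j : ra.ι) → Repr ℂ (ra.right j) (H × H) := fun j => ℛ ℂ _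
  let L : H →ₗ[ℂ] H :=
    ∑ i ∈ rx.index, ((φ ∘ₗ LinearMap.mulRight ℂ (rx.right i)) ∘ₗ
      antipode (R := ℂ)).smulRight (rx.left i)
  have hL : ∀ s : H, L s = ∑ i ∈ rx.index, φ (antipode (R := ℂ) s * rx.right i) • rx.left i := by
    intro s; simp [L, LinearMap.sum_apply]
  let mulRev : H ⊗[ℂ] H →ₗ[ℂ] H := (LinearMap.mul' ℂ H) ∘ₗ (TensorProduct.comm ℂ H H).toLinearMap
  let Ψ : H ⊗[ℂ] (H ⊗[ℂ] H) →ₗ[ℂ] H :=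
    mulRev ∘ₗ LinearMap.lTensor H mulRev ∘ₗ
      TensorProduct.map L (TensorProduct.map (antipode (R := ℂ))
        ((antipode (R := ℂ)) ∘ₗ (antipode (R := ℂ))))
  have hΨ : ∀ p q s : H, Ψ (p ⊗ₜ (q ⊗ₜ s)) =
      (antipode (R := ℂ) (antipode (R := ℂ) s) * antipode (R := ℂ) q) * L p := by
    intro p q s; simp [Ψ, mulRev]
  have h1 := sum_tmul_tmul_eq ra ru rv
  have h2 := congrArg Ψ h1
  simp only [map_sum, hΨ] at h2
  have hLa : ∑ j ∈ ra.index, ∑ k ∈ (rv j).index,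
      (antipode (R := ℂ) (antipode (R := ℂ) ((rv j).right k)) *
        antipode (R := ℂ) ((rv j).left k)) * L (ra.left j) = L a := by
    have step : ∀ j ∈ ra.index, ∑ k ∈ (rv j).index,
        (antipode (R := ℂ) (antipode (R := ℂ) ((rv j).right k)) *
          antipode (R := ℂ) ((rv j).left k)) * L (ra.left j)
        = counit (R := ℂ) (ra.right j) • L (ra.left j) := by
      intro j _
      let rS : Repr ℂ (antipode (R := ℂ) (ra.right j)) (H × H) :=
        { index := (rv j).index
          left := fun k => antipode (R := ℂ) ((rv j).right k)
          right := fun k => antipode (R := ℂ) ((rv j).left k)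
          eq := (comul_antipode_repr (rv j)).symm }
      have hcounit := sum_antipode_mul_eq_smul rS
      rw [counit_antipode'] at hcounit
      rw [← Finset.sum_mul]
      rw [show (∑ k ∈ (rv j).index,
          antipode (R := ℂ) (antipode (R := ℂ) ((rv j).right k)) *
            antipode (R := ℂ) ((rv j).left k))
          = counit (R := ℂ) (ra.right j) • (1 : H) from hcounit]
      rw [smul_mul_assoc, one_mul]
    rw [Finset.sum_congr rfl step]
    simp only [← map_smul, ← map_sum]
    rw [sum_smul_counit_left ra]
  rw [hLa] at h2
  have hRb : ∑ j ∈ ra.index, ∑ k ∈ (ru j).index,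
      (antipode (R := ℂ) (antipode (R := ℂ) (ra.right j)) *
        antipode (R := ℂ) ((ru j).right k)) * L ((ru j).left k)
      = ∑ j ∈ ra.index, φ (antipode (R := ℂ) (ra.left j) * x) •
          antipode (R := ℂ) (antipode (R := ℂ) (ra.right j)) := by
    refine Finset.sum_congr rfl fun j _ => ?_
    have expand : ∀ k ∈ (ru j).index,
        (antipode (R := ℂ) (antipode (R := ℂ) (ra.right j)) *
          antipode (R := ℂ) ((ru j).right k)) * L ((ru j).left k)
        = ∑ i ∈ rx.index, φ (antipode (R := ℂ) ((ru j).left k) * rx.right i) •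
            (antipode (R := ℂ) (antipode (R := ℂ) (ra.right j)) *
              (antipode (R := ℂ) ((ru j).right k) * rx.left i)) := by
      intro k _
      rw [hL, mul_assoc]
      simp [Finset.mul_sum, mul_smul_comm]
    rw [Finset.sum_congr rfl expand]
    have h5 := congrArg (fun z => antipode (R := ℂ) (antipode (R := ℂ) (ra.right j)) * z)
      (star_l hl (ra.left j) x (ru j) rx)
    simp only [Finset.mul_sum, mul_smul_comm, mul_one] at h5
    exact h5
  rw [hRb] at h2
  rw [h2, hL a]


universe w

/-- Reindex a representation along `Fin (card)`, in an arbitrary universe. -/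
noncomputable def reindexRepr {A : Type*} [AddCommMonoid A] [Module ℂ A]
    [CoalgebraStruct ℂ A] {ι : Type*} {a : A} (r : Coalgebra.Repr ℂ a ι) :
    Coalgebra.Repr ℂ a (ULift.{w} (Fin r.index.card)) where
  index := Finset.univ
  left := fun i => r.left (r.index.equivFin.symm i.down)
  right := fun i => r.right (r.index.equivFin.symm i.down)
  eq := by
    rw [← r.eq, ← Finset.sum_attach r.index (fun i => r.left i ⊗ₜ[ℂ] r.right i)]
    exact Fintype.sum_equiv ((Equiv.ulift).trans r.index.equivFin.symm) _ _ (fun i => rfl)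

lemma reindexRepr_sum {A : Type*} [AddCommMonoid A] [Module ℂ A]
    [CoalgebraStruct ℂ A] {M : Type*} [AddCommMonoid M] {ι : Type*} {a : A}
    (r : Coalgebra.Repr ℂ a ι) (G : A → A → M) :
    ∑ i ∈ (reindexRepr.{w} r).index, G ((reindexRepr.{w} r).left i) ((reindexRepr.{w} r).right i)
      = ∑ i ∈ r.index, G (r.left i) (r.right i) := by
  rw [← Finset.sum_attach r.index (fun i => G (r.left i) (r.right i))]
  exact Fintype.sum_equiv ((Equiv.ulift).trans r.index.equivFin.symm) _ _ (fun i => rfl)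

lemma circ_sum_aux {A : Type*} [AddCommMonoid A] (circ : A → A)
    (h0 : circ 0 = 0) (hadd : ∀ a b : A, circ (a + b) = circ a + circ b)
    {ι : Type*} (s : Finset ι) (f : ι → A) :
    circ (∑ i ∈ s, f i) = ∑ i ∈ s, circ (f i) := by
  classical
  induction s using Finset.cons_induction with
  | empty => simpa using h0
  | cons a s ha ih => rw [Finset.sum_cons, hadd, ih, Finset.sum_cons]

end CQGAux

/-- for a compact quantum group and any `τ ∈ H*`, the adjoint of
`id ⋆ τ` is `id ⋆ (conj τ ∘ ∘)`, and the adjoint of `τ ⋆ id` is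
`(conj τ ∘ S² ∘ ∘) ⋆ id` (expressed in Sweedler notation). -/
theorem convolution_adjoints
    (circ : H → H)
    (hcadd : ∀ x y : H, circ (x + y) = circ x + circ y)
    (hcsmul : ∀ (a : ℂ) (x : H), circ (a • x) = (starRingEnd ℂ) a • circ x)
    (hcinvol : ∀ x : H, circ (circ x) = x)
    (hcanti : ∀ {ι : Type*} (x : H) (r : Coalgebra.Repr ℂ x ι),
      Coalgebra.comul (R := ℂ) (circ x) =
        ∑ i ∈ r.index, circ (r.right i) ⊗ₜ[ℂ] circ (r.left i))
    (hcmul : ∀ x y : H, circ (x * y) = circ x * circ y)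
    (φ : H →ₗ[ℂ] ℂ) (hr : IsRightIntegral φ) (hl : IsLeftIntegral φ) (hn : φ 1 = 1)
    (hherm : ∀ x y : H, intInner circ φ y x = (starRingEnd ℂ) (intInner circ φ x y))
    (hpos : ∀ x : H, x ≠ 0 →
      0 < (intInner circ φ x x).re ∧ (intInner circ φ x x).im = 0)
    (τ : H →ₗ[ℂ] ℂ) :
    ∀ {ι κ : Type*} (x y : H) (rx : Coalgebra.Repr ℂ x ι) (ry : Coalgebra.Repr ℂ y κ),
      (intInner circ φ (∑ i ∈ rx.index, τ (rx.right i) • rx.left i) y =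
        intInner circ φ x
          (∑ j ∈ ry.index, (starRingEnd ℂ) (τ (circ (ry.right j))) • ry.left j)) ∧
      (intInner circ φ (∑ i ∈ rx.index, τ (rx.left i) • rx.right i) y =
        intInner circ φ x
          (∑ j ∈ ry.index,
            (starRingEnd ℂ)
              (τ (antipode (R := ℂ) (antipode (R := ℂ) (circ (ry.left j))))) •
              ry.right j)) := by
  classical
  intro ι κ x y rx ry
  have circ_zero : circ (0 : H) = 0 := by
    have := hcsmul 0 0
    simpa using this
  -- the representation of `comul (circ y)` obtained from `hcanti`
  have hcanti' : Coalgebra.comul (R := ℂ) (circ y) =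
      ∑ j ∈ ry.index, circ (ry.right j) ⊗ₜ[ℂ] circ (ry.left j) := by
    rw [hcanti y (CQGAux.reindexRepr ry)]
    exact CQGAux.reindexRepr_sum ry (fun l r => circ r ⊗ₜ[ℂ] circ l)
  let ra : Coalgebra.Repr ℂ (circ y) κ :=
    { index := ry.index
      left := fun j => circ (ry.right j)
      right := fun j => circ (ry.left j)
      eq := hcanti'.symm }
  constructor
  · -- first adjoint formula
    have e1 : intInner circ φ (∑ i ∈ rx.index, τ (rx.right i) • rx.left i) y
        = ∑ i ∈ rx.index, τ (rx.right i) *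
            φ (antipode (R := ℂ) (circ y) * rx.left i) := by
      simp [intInner, Finset.mul_sum, mul_smul_comm, map_sum, map_smul, smul_eq_mul, mul_comm]
    have e3 : circ (∑ j ∈ ry.index, (starRingEnd ℂ) (τ (circ (ry.right j))) • ry.left j)
        = ∑ j ∈ ry.index, τ (circ (ry.right j)) • circ (ry.left j) := by
      rw [CQGAux.circ_sum_aux circ circ_zero hcadd]
      exact Finset.sum_congr rfl fun j _ => by rw [hcsmul, Complex.conj_conj]
    have e4 : intInner circ φ x
          (∑ j ∈ ry.index, (starRingEnd ℂ) (τ (circ (ry.right j))) • ry.left j)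
        = ∑ j ∈ ry.index, τ (circ (ry.right j)) *
            φ (antipode (R := ℂ) (circ (ry.left j)) * x) := by
      rw [intInner, e3]
      simp [map_sum, map_smul, Finset.sum_mul, smul_mul_assoc, smul_eq_mul]
    have e2 := congrArg τ (CQGAux.key1 hr (circ y) x ra rx)
    simp only [map_sum, map_smul, smul_eq_mul] at e2
    rw [e1, e4]
    calc ∑ i ∈ rx.index, τ (rx.right i) * φ (antipode (R := ℂ) (circ y) * rx.left i)
        = ∑ i ∈ rx.index, φ (antipode (R := ℂ) (circ y) * rx.left i) * τ (rx.right i) :=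
          Finset.sum_congr rfl fun i _ => mul_comm _ _
      _ = ∑ j ∈ ry.index, φ (antipode (R := ℂ) (circ (ry.left j)) * x) *
            τ (circ (ry.right j)) := e2
      _ = _ := Finset.sum_congr rfl fun j _ => mul_comm _ _
  · -- second adjoint formula
    have e1 : intInner circ φ (∑ i ∈ rx.index, τ (rx.left i) • rx.right i) y
        = ∑ i ∈ rx.index, τ (rx.left i) *
            φ (antipode (R := ℂ) (circ y) * rx.right i) := by
      simp [intInner, Finset.mul_sum, mul_smul_comm, map_sum, map_smul, smul_eq_mul, mul_comm]
    have e3 : circ (∑ j ∈ ry.index,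
          (starRingEnd ℂ)
            (τ (antipode (R := ℂ) (antipode (R := ℂ) (circ (ry.left j))))) • ry.right j)
        = ∑ j ∈ ry.index,
            τ (antipode (R := ℂ) (antipode (R := ℂ) (circ (ry.left j)))) • circ (ry.right j) := by
      rw [CQGAux.circ_sum_aux circ circ_zero hcadd]
      exact Finset.sum_congr rfl fun j _ => by rw [hcsmul, Complex.conj_conj]
    have e4 : intInner circ φ x
          (∑ j ∈ ry.index,
            (starRingEnd ℂ)
              (τ (antipode (R := ℂ) (antipode (R := ℂ) (circ (ry.left j))))) • ry.right j)
        = ∑ j ∈ ry.index,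
            τ (antipode (R := ℂ) (antipode (R := ℂ) (circ (ry.left j)))) *
              φ (antipode (R := ℂ) (circ (ry.right j)) * x) := by
      rw [intInner, e3]
      simp [map_sum, map_smul, Finset.sum_mul, smul_mul_assoc, smul_eq_mul]
    have e2 := congrArg τ (CQGAux.key2 hl (circ y) x ra rx)
    simp only [map_sum, map_smul, smul_eq_mul] at e2
    rw [e1, e4]
    calc ∑ i ∈ rx.index, τ (rx.left i) * φ (antipode (R := ℂ) (circ y) * rx.right i)
        = ∑ i ∈ rx.index, φ (antipode (R := ℂ) (circ y) * rx.right i) * τ (rx.left i) :=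
          Finset.sum_congr rfl fun i _ => mul_comm _ _
      _ = ∑ j ∈ ry.index, φ (antipode (R := ℂ) (circ (ry.right j)) * x) *
            τ (antipode (R := ℂ) (antipode (R := ℂ) (circ (ry.left j)))) := e2
      _ = _ := Finset.sum_congr rfl fun j _ => mul_comm _ _

end CQGAux
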